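/- Let R > 0 and let g, h : ℂ → ℂ be complex-differentiable on the open ball B(0,R) with g(0) = 0, and let k be a natural number. Then the positively oriented circle integrals ∮_{|z|=r} conj(g(z)) · h(z) / z^k dz tend to 0 as r tends to 0 from the right. -/

import Mathlib

open Complex Metric Filter

private lemma hasDerivAt_conj_conj_aux {g : ℂ → ℂ} {w g' : ℂ}
    (hg : HasDerivAt g g' ((starRingEnd ℂ) w)) :
    HasDerivAt (fun z => (starRingEnd ℂ) (g ((starRingEnd ℂ) z))) ((starRingEnd ℂ) g') w := by
  rw [hasDerivAt_iff_tendsto_slope] at hg ⊢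
  have h1 : Tendsto (starRingEnd ℂ) (nhdsWithin w {w}ᶜ)
      (nhdsWithin ((starRingEnd ℂ) w) {(starRingEnd ℂ) w}ᶜ) := by
    refine tendsto_nhdsWithin_of_tendsto_nhds_of_eventually_within _
      ((Complex.continuous_conj.tendsto w).mono_left nhdsWithin_le_nhds) ?_
    filter_upwards [eventually_mem_nhdsWithin] with z hz
    exact fun h => hz ((starRingEnd ℂ).injective h)
  have key : ∀ z : ℂ, slope (fun z => (starRingEnd ℂ) (g ((starRingEnd ℂ) z))) w z
      = (starRingEnd ℂ) (slope g ((starRingEnd ℂ) w) ((starRingEnd ℂ) z)) := by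
    intro z
    simp only [slope_def_field, map_div₀, map_sub, Complex.conj_conj]
  have := ((Complex.continuous_conj.tendsto g').comp (hg.comp h1))
  refine this.congr fun z => ?_
  simp [Function.comp, key z]

/-- The circle integrals `∮_{|z|=r} conj (g z) * h z / z^k dz` tend to `0` as `r → 0⁺`,
for `g, h` holomorphic on `ball 0 R` with `g 0 = 0`. -/
theorem circleIntegral_conj_div_pow_tendsto_zero (R : ℝ) (hR : 0 < R) (g h : ℂ → ℂ)
    (hg : DifferentiableOn ℂ g (ball (0 : ℂ) R))
    (hh : DifferentiableOn ℂ h (ball (0 : ℂ) R))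
    (hg0 : g 0 = 0) (k : ℕ) :
    Tendsto (fun r : ℝ => ∮ z in C(0, r), (starRingEnd ℂ) (g z) * h z / z ^ k)
      (nhdsWithin 0 (Set.Ioi 0)) (nhds 0) := by
  set G : ℂ → ℂ := fun w => (starRingEnd ℂ) (g ((starRingEnd ℂ) w)) with hGdef
  have hGdiff : ∀ w ∈ ball (0 : ℂ) R, DifferentiableAt ℂ G w := by
    intro w hw
    have hw' : (starRingEnd ℂ) w ∈ ball (0 : ℂ) R := by
      simpa [mem_ball, Complex.dist_eq] using hw
    exact (hasDerivAt_conj_conj_aux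
      ((hg.differentiableAt (isOpen_ball.mem_nhds hw')).hasDerivAt)).differentiableAt
  have hG0 : G 0 = 0 := by simp [hGdef, hg0]
  set s : ℝ := R / 2 with hs
  have hs0 : 0 < s := by positivity
  have hsR : s < R := by simp only [hs]; linarith
  have hsub : sphere (0 : ℂ) s ⊆ ball (0 : ℂ) R := sphere_subset_closedBall.trans
    (closedBall_subset_ball hsR)
  obtain ⟨M₀, hM₀⟩ := (isCompact_sphere (0 : ℂ) s).exists_bound_of_continuousOn
    ((hh.continuousOn).mono hsub)
  set M : ℝ := max M₀ 1 with hM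
  have hMpos : 0 < M := lt_of_lt_of_le one_pos (le_max_right _ _)
  have hMh : ∀ z ∈ sphere (0 : ℂ) s, ‖h z‖ ≤ M := fun z hz =>
    (hM₀ z hz).trans (le_max_left _ _)
  rw [NormedAddCommGroup.tendsto_nhds_zero]
  intro ε hε
  set D : ℝ := 2 * Real.pi * s * M / s ^ k with hD
  have hDpos : 0 < D := by positivity
  set ε' : ℝ := ε / (2 * D) with hε'
  have hε'pos : 0 < ε' := by positivity
  -- continuity of `G` at 0 gives a `δ`
  obtain ⟨δ, hδ0, hδ⟩ := Metric.continuousAt_iff.1 (hGdiff 0 (mem_ball_self hR)).continuousAt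
    ε' hε'pos
  set t : ℝ := min s (Real.sqrt (δ * s)) with ht
  have ht0 : 0 < t := lt_min hs0 (Real.sqrt_pos.2 (by positivity))
  filter_upwards [Ioo_mem_nhdsGT_of_mem (by exact ⟨le_rfl, ht0⟩ : (0:ℝ) ∈ Set.Ico 0 t)]
    with r hr
  obtain ⟨hr0, hrt⟩ := hr
  have hrs : r ≤ s := le_of_lt (lt_of_lt_of_le hrt (min_le_left _ _))
  have hrR : r < R := lt_of_le_of_lt hrs hsR
  have hr2 : r ^ 2 / s < δ := by
    have h1 : r < Real.sqrt (δ * s) := lt_of_lt_of_le hrt (min_le_right _ _)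
    have h2 : r ^ 2 < δ * s := by
      have := Real.sq_sqrt (le_of_lt (mul_pos hδ0 hs0))
      nlinarith [Real.sqrt_nonneg (δ * s)]
    rw [div_lt_iff₀ hs0]
    linarith
  set F : ℂ → ℂ := fun z => G ((r : ℂ) ^ 2 / z) * h z / z ^ k with hF
  -- Step 1 : the integrand agrees with `F` on the circle of radius `r`
  have step1 : (∮ z in C(0, r), (starRingEnd ℂ) (g z) * h z / z ^ k)
      = ∮ z in C(0, r), F z := by
    refine circleIntegral.integral_congr hr0.le fun z hz => ?_
    have hzabs : ‖z‖ = r := by simpa [Complex.dist_eq] using hz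
    have hz0 : z ≠ 0 := by
      intro h0; rw [h0] at hzabs; simp at hzabs; exact hr0.ne' hzabs.symm
    have hconj : (starRingEnd ℂ) z = (r : ℂ) ^ 2 / z := by
      field_simp
      rw [mul_comm, Complex.mul_conj]
      norm_cast
      simp [Complex.normSq_eq_norm_sq, hzabs]
    have : G ((r : ℂ) ^ 2 / z) = (starRingEnd ℂ) (g z) := by
      rw [← hconj]; simp [hGdef]
    simp [hF, this]
  -- helper : `F` is differentiable on the annulus
  have hFdiff : ∀ z : ℂ, r ≤ ‖z‖ → ‖z‖ ≤ s → DifferentiableAt ℂ F z := by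
    intro z hz1 hz2
    have hz0 : z ≠ 0 := by
      intro h0; rw [h0] at hz1; simp at hz1; exact absurd hz1 (not_le.2 hr0)
    have hq : DifferentiableAt ℂ (fun z : ℂ => (r : ℂ) ^ 2 / z) z :=
      (differentiableAt_const _).div differentiableAt_id hz0
    have hmem : (r : ℂ) ^ 2 / z ∈ ball (0 : ℂ) R := by
      rw [mem_ball, Complex.dist_eq, sub_zero, norm_div]
      have : ‖(r : ℂ) ^ 2‖ = r ^ 2 := by
        rw [norm_pow]; norm_num
      rw [this]
      have habs0 : 0 < ‖z‖ := lt_of_lt_of_le hr0 hz1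
      calc r ^ 2 / ‖z‖ ≤ r ^ 2 / r := by
            apply div_le_div_of_nonneg_left (by positivity) hr0 hz1
        _ = r := by field_simp [pow_two]
        _ < R := hrR
    have hGq : DifferentiableAt ℂ (fun z : ℂ => G ((r : ℂ) ^ 2 / z)) z :=
      (hGdiff _ hmem).comp z hq
    have hhz : DifferentiableAt ℂ h z := hh.differentiableAt (isOpen_ball.mem_nhds
      (by rw [mem_ball, Complex.dist_eq, sub_zero]; exact lt_of_le_of_lt hz2 hsR))
    exact (hGq.mul hhz).div (differentiableAt_pow k) (pow_ne_zero k hz0)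
  -- Step 2 : move the integral to the circle of radius `s`
  have step2 : (∮ z in C(0, s), F z) = ∮ z in C(0, r), F z := by
    refine Complex.circleIntegral_eq_of_differentiable_on_annulus_off_countable hr0 hrs
      Set.countable_empty ?_ ?_
    · intro z hz
      obtain ⟨hz1, hz2⟩ := hz
      rw [mem_closedBall, Complex.dist_eq, sub_zero] at hz1
      rw [mem_ball, Complex.dist_eq, sub_zero, not_lt] at hz2
      exact (hFdiff z hz2 hz1).continuousAt.continuousWithinAt
    · intro z hz
      obtain ⟨⟨hz1, hz2⟩, -⟩ := hz
      rw [mem_ball, Complex.dist_eq, sub_zero] at hz1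
      rw [mem_closedBall, Complex.dist_eq, sub_zero, not_le] at hz2
      exact hFdiff z hz2.le hz1.le
  -- Step 3 : bound the integral on the circle of radius `s`
  have step3 : ‖∮ z in C(0, s), F z‖ ≤ 2 * Real.pi * s * (ε' * M / s ^ k) := by
    refine circleIntegral.norm_integral_le_of_norm_le_const hs0.le fun z hz => ?_
    have hzabs : ‖z‖ = s := by simpa [Complex.dist_eq] using hz
    have hz0 : z ≠ 0 := by
      intro h0; rw [h0] at hzabs; simp at hzabs; exact hs0.ne' hzabs.symm
    have hGsmall : ‖G ((r : ℂ) ^ 2 / z)‖ < ε' := by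
      have : dist ((r : ℂ) ^ 2 / z) 0 < δ := by
        rw [Complex.dist_eq, sub_zero, norm_div, norm_pow]
        simp only [hzabs]
        have : ‖(r : ℂ)‖ = r := by
          rw [Complex.norm_real, Real.norm_eq_abs, abs_of_pos hr0]
        rw [this]
        exact hr2
      have h2 := hδ this
      rw [hG0, dist_zero_right] at h2
      exact h2
    have : ‖F z‖ = ‖G ((r : ℂ) ^ 2 / z)‖ * ‖h z‖ / s ^ k := by
      simp [hF, hzabs]
    rw [this]
    apply div_le_div_of_nonneg_right _ (by positivity)
    · exact mul_le_mul hGsmall.le (hMh z hz) (norm_nonneg _) hε'pos.le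
  rw [step1, ← step2]
  calc ‖∮ z in C(0, s), F z‖ ≤ 2 * Real.pi * s * (ε' * M / s ^ k) := step3
    _ = D * ε' := by rw [hD]; ring
    _ = ε / 2 := by rw [hε']; field_simp
    _ < ε := by linarith
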